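/- For every coherent pair of random variables (X,Y) one has E|X-Y| ≤ 1/2, and this bound is sharp: the supremum of E|X-Y| over all coherent pairs (X,Y) equals 1/2 (it is attained, e.g., by X = 1_A and Y = P(A) for any event A with P(A) = 1/2). -/

import Mathlib

open MeasureTheory ProbabilityTheory

section Aux

/-- The key pointwise inequality: for `z ∈ {0,1}` and any reals `x, y`,
`|x - y| ≤ 1/2 + (1-2x)(z-x) + (1-2y)(z-y)`. -/
lemma abs_key_ineq (x y z : ℝ) (hz : z = 0 ∨ z = 1) :
    |x - y| ≤ 1 / 2 + (1 - 2 * x) * (z - x) + (1 - 2 * y) * (z - y) := by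
  rcases hz with h | h <;> subst h <;> rcases le_total x y with h' | h'
  · rw [abs_of_nonpos (by linarith)]; nlinarith [sq_nonneg x, sq_nonneg (y - 1/2)]
  · rw [abs_of_nonneg (by linarith)]; nlinarith [sq_nonneg (x - 1/2), sq_nonneg y]
  · rw [abs_of_nonpos (by linarith)]; nlinarith [sq_nonneg (x - 1/2), sq_nonneg (y - 1)]
  · rw [abs_of_nonneg (by linarith)]; nlinarith [sq_nonneg (x - 1), sq_nonneg (y - 1/2)]

/-- The correction term `(1 - 2·E[f|G])(f - E[f|G])` is integrable and has zero mean. -/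
lemma phi_integrable_and_zero {Ω : Type} [m0 : MeasurableSpace Ω]
    (μ : Measure Ω) [IsProbabilityMeasure μ] {G : MeasurableSpace Ω} (hG : G ≤ m0)
    {f : Ω → ℝ} (hf_int : Integrable f μ) (hf_bd : ∀ ω, |f ω| ≤ 1) :
    Integrable (fun ω => (1 - 2 * (μ[f|G]) ω) * (f ω - (μ[f|G]) ω)) μ ∧
      ∫ ω, (1 - 2 * (μ[f|G]) ω) * (f ω - (μ[f|G]) ω) ∂μ = 0 := by
  haveI : SigmaFinite (μ.trim hG) := by infer_instance
  set X : Ω → ℝ := μ[f|G] with hX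
  have hX_sm : StronglyMeasurable[G] X := stronglyMeasurable_condExp
  have hX_int : Integrable X μ := integrable_condExp
  have hX_bd : ∀ᵐ ω ∂μ, |X ω| ≤ 1 := by
    have := ae_bdd_condExp_of_ae_bdd (μ := μ) (m := G) (R := 1) (f := f)
      (ae_of_all μ (fun ω => by simpa using hf_bd ω))
    simpa using this
  set g : Ω → ℝ := fun ω => 1 - 2 * X ω with hg
  have hg_sm : StronglyMeasurable[G] g :=
    stronglyMeasurable_const.sub (stronglyMeasurable_const.mul hX_sm)
  have hg_asm : AEStronglyMeasurable[m0] g μ :=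
    (hg_sm.mono hG).aestronglyMeasurable
  have hg_bd : ∀ᵐ ω ∂μ, |g ω| ≤ 3 := by
    filter_upwards [hX_bd] with ω h
    rw [hg]; dsimp only
    rw [abs_le] at *; constructor <;> linarith [h.1, h.2]
  have hgf_int : Integrable (g * f) μ := by
    refine Integrable.mono' (integrable_const 3) (hg_asm.mul hf_int.1) ?_
    filter_upwards [hg_bd] with ω h
    have := hf_bd ω
    rw [Pi.mul_apply, norm_mul, Real.norm_eq_abs, Real.norm_eq_abs]
    calc |g ω| * |f ω| ≤ 3 * 1 := by
          exact mul_le_mul h this (abs_nonneg _) (by norm_num)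
      _ = 3 := by norm_num
  have hgX_int : Integrable (g * X) μ := by
    refine Integrable.mono' (integrable_const 3) (hg_asm.mul hX_int.1) ?_
    filter_upwards [hg_bd, hX_bd] with ω h h'
    rw [Pi.mul_apply, norm_mul, Real.norm_eq_abs, Real.norm_eq_abs]
    calc |g ω| * |X ω| ≤ 3 * 1 := mul_le_mul h h' (abs_nonneg _) (by norm_num)
      _ = 3 := by norm_num
  have h_eq : ∫ ω, g ω * f ω ∂μ = ∫ ω, g ω * X ω ∂μ := by
    have h1 : ∫ ω, (μ[g * f|G]) ω ∂μ = ∫ ω, (g * f) ω ∂μ := integral_condExp hG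
    have h2 : μ[g * f|G] =ᵐ[μ] g * μ[f|G] :=
      condExp_mul_of_stronglyMeasurable_left hg_sm hgf_int hf_int
    calc ∫ ω, g ω * f ω ∂μ = ∫ ω, (g * f) ω ∂μ := rfl
      _ = ∫ ω, (μ[g * f|G]) ω ∂μ := h1.symm
      _ = ∫ ω, (g * μ[f|G]) ω ∂μ := integral_congr_ae h2
      _ = ∫ ω, g ω * X ω ∂μ := rfl
  have h_fun : (fun ω => (1 - 2 * X ω) * (f ω - X ω)) = fun ω => g ω * f ω - g ω * X ω := by
    funext ω; rw [hg]; ring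
  constructor
  · rw [h_fun]; exact hgf_int.sub hgX_int
  · rw [h_fun]
    have h3 : ∫ ω, (g ω * f ω - g ω * X ω) ∂μ
        = (∫ ω, g ω * f ω ∂μ) - ∫ ω, g ω * X ω ∂μ := integral_sub hgf_int hgX_int
    rw [h3, h_eq, sub_self]

/-- Core estimate: for any event `A` and sub-σ-algebras `G`, `H`,
`E|E[1_A|G] - E[1_A|H]| ≤ 1/2`. -/
lemma coherent_core {Ω : Type} [m0 : MeasurableSpace Ω] (μ : Measure Ω) [IsProbabilityMeasure μ]
    {A : Set Ω} (hA : MeasurableSet[m0] A) (G H : MeasurableSpace Ω) (hG : G ≤ m0) (hH : H ≤ m0) :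
    ∫ ω, |(μ[A.indicator (fun _ => (1:ℝ))|G]) ω - (μ[A.indicator (fun _ => (1:ℝ))|H]) ω| ∂μ
      ≤ 1 / 2 := by
  letI : MeasurableSpace Ω := m0
  set f := A.indicator (fun _ => (1:ℝ)) with hf
  have hf_int : Integrable f μ := (integrable_const 1).indicator hA
  have hf01 : ∀ ω, f ω = 0 ∨ f ω = 1 := fun ω => by
    by_cases h : ω ∈ A
    · right; simp [hf, Set.indicator_of_mem h]
    · left; simp [hf, Set.indicator_of_notMem h]
  have hf_bd : ∀ ω, |f ω| ≤ 1 := fun ω => by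
    rcases hf01 ω with h | h <;> rw [h] <;> norm_num
  obtain ⟨hφG_int, hφG_zero⟩ := phi_integrable_and_zero μ hG hf_int hf_bd
  obtain ⟨hφH_int, hφH_zero⟩ := phi_integrable_and_zero μ hH hf_int hf_bd
  set X : Ω → ℝ := μ[f|G] with hXdef
  set Y : Ω → ℝ := μ[f|H] with hYdef
  have hX_int : Integrable X μ := integrable_condExp
  have hY_int : Integrable Y μ := integrable_condExp
  have habs_int : Integrable (fun ω => |X ω - Y ω|) μ := (hX_int.sub hY_int).abs
  have hRHS_int : Integrable (fun ω =>
      1 / 2 + (1 - 2 * X ω) * (f ω - X ω) + (1 - 2 * Y ω) * (f ω - Y ω)) μ :=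
    (((integrable_const (1/2 : ℝ)).add hφG_int).add hφH_int)
  have hmono : ∫ ω, |X ω - Y ω| ∂μ ≤ ∫ ω,
      (1 / 2 + (1 - 2 * X ω) * (f ω - X ω) + (1 - 2 * Y ω) * (f ω - Y ω)) ∂μ :=
    integral_mono habs_int hRHS_int (fun ω => abs_key_ineq _ _ _ (hf01 ω))
  refine hmono.trans ?_
  have h1 : ∫ ω, (1 / 2 + (1 - 2 * X ω) * (f ω - X ω) + (1 - 2 * Y ω) * (f ω - Y ω)) ∂μ
      = (∫ ω, (1 / 2 + (1 - 2 * X ω) * (f ω - X ω)) ∂μ)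
        + ∫ ω, (1 - 2 * Y ω) * (f ω - Y ω) ∂μ :=
    integral_add ((integrable_const (1/2 : ℝ)).add hφG_int) hφH_int
  have h2 : ∫ ω, (1 / 2 + (1 - 2 * X ω) * (f ω - X ω)) ∂μ
      = (∫ _ω, (1/2 : ℝ) ∂μ) + ∫ ω, (1 - 2 * X ω) * (f ω - X ω) ∂μ :=
    integral_add (integrable_const (1/2 : ℝ)) hφG_int
  rw [h1, h2, hφG_zero, hφH_zero, integral_const]
  simp

/-- The two-point probability space giving the extremal example. -/
noncomputable def exMeasure : Measure Bool :=
  (2 : ENNReal)⁻¹ • Measure.dirac true + (2 : ENNReal)⁻¹ • Measure.dirac false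

instance : IsProbabilityMeasure exMeasure := by
  constructor
  simp [exMeasure, ENNReal.inv_two_add_inv_two]

end Aux

/-- A pair of random variables `(X, Y)` on a probability space is *coherent* if there are an
event `A` and sub-σ-algebras `G`, `H` such that `X = E[1_A | G]` and `Y = E[1_A | H]` a.s. -/
def IsCoherentPair {Ω : Type} [m0 : MeasurableSpace Ω] (μ : Measure Ω) (X Y : Ω → ℝ) : Prop :=
  ∃ (A : Set Ω) (G H : MeasurableSpace Ω),
    MeasurableSet A ∧ G ≤ m0 ∧ H ≤ m0 ∧
    X =ᵐ[μ] μ[A.indicator (fun _ => (1 : ℝ)) | G] ∧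
    Y =ᵐ[μ] μ[A.indicator (fun _ => (1 : ℝ)) | H]

/-- The set of values `E|X - Y|` over all coherent pairs `(X, Y)`. -/
def coherentAbsVals : Set ℝ :=
  { r : ℝ | ∃ (Ω : Type) (m0 : MeasurableSpace Ω) (μ : Measure Ω),
      IsProbabilityMeasure μ ∧ ∃ X Y : Ω → ℝ,
        IsCoherentPair μ X Y ∧ r = ∫ ω, |X ω - Y ω| ∂μ }

lemma half_mem : (1/2 : ℝ) ∈ coherentAbsVals := by
  classical
  set A : Set Bool := {true} with hAdef
  have hA : MeasurableSet A := measurableSet_singleton true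
  set f : Bool → ℝ := A.indicator (fun _ => (1:ℝ)) with hfdef
  have hf_sm : StronglyMeasurable f := stronglyMeasurable_const.indicator hA
  have hf_int : Integrable f exMeasure := (integrable_const 1).indicator hA
  have hf01 : ∀ ω, f ω = 0 ∨ f ω = 1 := fun ω => by
    by_cases h : ω ∈ A
    · right; simp [hfdef, Set.indicator_of_mem h]
    · left; simp [hfdef, Set.indicator_of_notMem h]
  have hint : ∫ ω, f ω ∂exMeasure = 1/2 := by
    rw [hfdef, integral_indicator_const (1:ℝ) hA]
    have : exMeasure {true} = 2⁻¹ := by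
      simp [exMeasure, Measure.dirac_apply' _ (measurableSet_singleton true)]
    rw [hAdef, measureReal_def, this]
    simp [ENNReal.toReal_inv]
  refine ⟨Bool, Bool.instMeasurableSpace, exMeasure, inferInstance, (fun _ => (1/2 : ℝ)),
    f, ?_, ?_⟩
  · refine ⟨A, ⊥, Bool.instMeasurableSpace, hA, bot_le, le_rfl, ?_, ?_⟩
    · rw [condExp_bot (μ := exMeasure) f, hint]
    · rw [condExp_of_stronglyMeasurable le_rfl hf_sm hf_int]
  · have h2 : (fun ω => |(1/2 : ℝ) - f ω|) = fun _ => (1/2 : ℝ) := by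
      funext ω
      rcases hf01 ω with h | h <;> rw [h] <;> norm_num
    rw [h2, integral_const, probReal_univ]
    simp

/-- Every coherent pair satisfies `E|X - Y| ≤ 1/2`, and the supremum of `E|X - Y|` over all
coherent pairs equals `1/2`, the bound being attained. -/
theorem sup_coherent_abs_eq_half :
    (∀ (Ω : Type) (m0 : MeasurableSpace Ω) (μ : Measure Ω), IsProbabilityMeasure μ →
        ∀ X Y : Ω → ℝ, IsCoherentPair μ X Y → ∫ ω, |X ω - Y ω| ∂μ ≤ 1 / 2) ∧
    IsGreatest coherentAbsVals (1 / 2) := by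
  have hbound : ∀ (Ω : Type) (m0 : MeasurableSpace Ω) (μ : Measure Ω), IsProbabilityMeasure μ →
      ∀ X Y : Ω → ℝ, IsCoherentPair μ X Y → ∫ ω, |X ω - Y ω| ∂μ ≤ 1 / 2 := by
    intro Ω m0 μ hμ X Y hcoh
    haveI := hμ
    obtain ⟨A, G, H, hA, hG, hH, hX, hY⟩ := hcoh
    letI : MeasurableSpace Ω := m0
    have hA' : MeasurableSet[m0] A := hH A hA
    have hcong : ∫ ω, |X ω - Y ω| ∂μ
        = ∫ ω, |(μ[A.indicator (fun _ => (1:ℝ))|G]) ω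
            - (μ[A.indicator (fun _ => (1:ℝ))|H]) ω| ∂μ := by
      apply integral_congr_ae
      filter_upwards [hX, hY] with ω h1 h2
      rw [h1, h2]
    rw [hcong]
    exact coherent_core μ hA' G H hG hH
  refine ⟨hbound, half_mem, ?_⟩
  rintro r ⟨Ω, m0, μ, hμ, X, Y, hcoh, rfl⟩
  exact hbound Ω m0 μ hμ X Y hcoh
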